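/- If X : [0,T] → ℝ is absolutely continuous with derivative X' ∈ L¹([0,T]) and Y : [0,T] → ℝ is continuous, then the forward integral ∫₀ᵗ Y d⁻X exists and equals ∫₀ᵗ Y(s) X'(s) ds for every t ∈ [0,T]. -/

import Mathlib

open MeasureTheory Filter Set

/-- `f` is extended constantly outside `[0,T]`. -/
def ExtConst (T : ℝ) (f : ℝ → ℝ) : Prop :=
  (∀ t ≤ (0:ℝ), f t = f 0) ∧ ∀ t, T ≤ t → f t = f T

/-- The `ε`-forward integral `I⁻(ε,Y,dX)(t)`. -/
noncomputable def Iminus (ε : ℝ) (Y X : ℝ → ℝ) (t : ℝ) : ℝ :=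
  ∫ s in (0:ℝ)..t, Y s * (X (s + ε) - X s) / ε

lemma keyA (T : ℝ) (X X' : ℝ → ℝ)
    (hXe2 : ∀ t, T ≤ t → X t = X T)
    (hX'int : IntegrableOn X' (Set.Icc 0 T))
    (hAC : ∀ t ∈ Set.Icc (0:ℝ) T, X t = X 0 + ∫ s in (0:ℝ)..t, X' s) :
    ∀ a b : ℝ, 0 ≤ a → a ≤ b →
      X b - X a = ∫ u in a..b, (Set.Icc (0:ℝ) T).indicator X' u := by
  set g := (Set.Icc (0:ℝ) T).indicator X' with hg
  have hgint : Integrable g := by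
    rw [hg, integrable_indicator_iff measurableSet_Icc]; exact hX'int
  have hgii : ∀ a b : ℝ, IntervalIntegrable g volume a b :=
    fun a b => (hgint.integrableOn).intervalIntegrable
  have hX'ii : ∀ a b : ℝ, 0 ≤ a → a ≤ b → b ≤ T → IntervalIntegrable X' volume a b := by
    intro a b ha hab hb
    apply (hX'int.mono_set ?_).intervalIntegrable
    rw [uIcc_of_le hab]
    exact fun x hx => ⟨ha.trans hx.1, hx.2.trans hb⟩
  have case1 : ∀ a b : ℝ, 0 ≤ a → a ≤ b → b ≤ T → X b - X a = ∫ u in a..b, g u := by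
    intro a b ha hab hb
    have h1 := hAC b ⟨ha.trans hab, hb⟩
    have h2 := hAC a ⟨ha, hab.trans hb⟩
    have h3 : (∫ s in (0:ℝ)..b, X' s) - ∫ s in (0:ℝ)..a, X' s = ∫ s in a..b, X' s :=
      intervalIntegral.integral_interval_sub_left (hX'ii 0 b le_rfl (ha.trans hab) hb)
        (hX'ii 0 a le_rfl ha (hab.trans hb))
    have h4 : ∫ s in a..b, X' s = ∫ u in a..b, g u := by
      refine (intervalIntegral.integral_congr fun u hu => ?_).symm
      rw [uIcc_of_le hab] at hu
      exact Set.indicator_of_mem (Set.mem_Icc.mpr ⟨ha.trans hu.1, hu.2.trans hb⟩) X'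
    rw [h1, h2, ← h4, ← h3]; ring
  have hzero : ∀ a b : ℝ, T ≤ a → a ≤ b → (∫ u in a..b, g u) = 0 := by
    intro a b hTa hab
    rw [intervalIntegral.integral_of_le hab]
    refine setIntegral_eq_zero_of_forall_eq_zero fun x hx => ?_
    exact Set.indicator_of_notMem (fun h => absurd (hTa.trans_lt hx.1) (not_lt.2 h.2)) X'
  intro a b ha hab
  rcases le_total b T with hb | hb
  · exact case1 a b ha hab hb
  rcases le_total a T with haT | haT
  · have e1 : X b = X T := hXe2 b hb
    have e2 := case1 a T ha haT le_rfl
    have e3 : (∫ u in a..b, g u) = (∫ u in a..T, g u) + ∫ u in T..b, g u :=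
      (intervalIntegral.integral_add_adjacent_intervals (hgii a T) (hgii T b)).symm
    rw [e1, e3, hzero T b le_rfl hb, e2]; ring
  · rw [hXe2 a haT, hXe2 b (haT.trans hab), hzero a b haT hab]; ring

lemma limit_step (t : ℝ) (Y g : ℝ → ℝ) (hYc : Continuous Y) (u : ℝ)
    (hu0 : u ≠ 0) (hut : u ≠ t) :
    Tendsto (fun ε => g u * (∫ s in Set.Ioc 0 t ∩ Set.Ico (u-ε) u, Y s) / ε) (nhdsWithin 0 (Set.Ioi 0))
      (nhds ((Set.Ioo 0 t).indicator (fun v => g v * Y v) u)) := by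
  rcases lt_or_gt_of_ne hu0 with hneg | hpos
  · -- u < 0 : everything vanishes
    have hS : ∀ ε : ℝ, Set.Ioc 0 t ∩ Set.Ico (u-ε) u = ∅ := by
      intro ε
      ext s; simp only [Set.mem_inter_iff, Set.mem_Ioc, Set.mem_Ico, Set.mem_empty_iff_false,
        iff_false, not_and]
      intro h1 h2 h3; nlinarith [h1.1]
    have h0 : u ∉ Set.Ioo (0:ℝ) t := fun h => absurd h.1 (not_lt.2 hneg.le)
    rw [Set.indicator_of_notMem h0]
    refine Tendsto.congr (fun ε => ?_) tendsto_const_nhds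
    rw [hS ε]; simp
  rcases lt_trichotomy u t with hlt | heq | hgt
  · -- 0 < u < t
    rw [Set.indicator_of_mem (Set.mem_Ioo.mpr ⟨hpos, hlt⟩)]
    set Z : ℝ → ℝ := fun v => ∫ x in (0:ℝ)..v, Y x with hZ
    have hz : HasDerivAt Z (Y u) u :=
      intervalIntegral.integral_hasDerivAt_right (hYc.intervalIntegrable 0 u)
        hYc.stronglyMeasurable.stronglyMeasurableAtFilter
        hYc.continuousAt
    have hcomp : Tendsto (fun ε : ℝ => u - ε) (nhdsWithin 0 (Set.Ioi 0))
        (nhdsWithin u {u}ᶜ) := by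
      apply tendsto_nhdsWithin_of_tendsto_nhds_of_eventually_within
      · have : Tendsto (fun ε : ℝ => u - ε) (nhds 0) (nhds (u - 0)) :=
          (continuous_const.sub continuous_id).tendsto 0
        simpa using this.mono_left nhdsWithin_le_nhds
      · filter_upwards [self_mem_nhdsWithin] with ε (hε : 0 < ε)
        simp only [Set.mem_compl_iff, Set.mem_singleton_iff]
        intro h; nlinarith [h]
    have hslope : Tendsto (fun ε : ℝ => (Z u - Z (u - ε)) / ε) (nhdsWithin 0 (Set.Ioi 0))
        (nhds (Y u)) := by
      have h1 := (hasDerivAt_iff_tendsto_slope.mp hz).comp hcomp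
      refine h1.congr fun ε => ?_
      show slope Z u (u - ε) = _
      rw [slope_def_field]
      have h2 : u - ε - u = -ε := by ring
      rw [h2, div_neg, ← neg_div, neg_sub]
    have := hslope.const_mul (g u)
    refine this.congr' ?_
    filter_upwards [Ioo_mem_nhdsGT hpos] with ε hε
    have hSu : Set.Ioc 0 t ∩ Set.Ico (u-ε) u = Set.Ico (u-ε) u := by
      apply Set.inter_eq_self_of_subset_right
      intro s hs
      exact ⟨by nlinarith [hs.1, hε.1, hε.2], by nlinarith [hs.2]⟩
    have hIco : (∫ s in Set.Ico (u-ε) u, Y s) = Z u - Z (u - ε) := by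
      have h2 : (∫ s in Set.Ico (u-ε) u, Y s) = ∫ s in (u-ε)..u, Y s := by
        rw [intervalIntegral.integral_of_le (by linarith [hε.1] : u - ε ≤ u),
          integral_Ico_eq_integral_Ioo, integral_Ioc_eq_integral_Ioo]
      rw [h2, hZ]
      have := intervalIntegral.integral_interval_sub_left (μ := volume)
        (hYc.intervalIntegrable 0 u) (hYc.intervalIntegrable 0 (u - ε))
      simp only at this ⊢
      rw [← this]
    rw [hSu, hIco]
    ring
  · exact absurd heq hut
  · -- u > t : eventually empty
    have h0 : u ∉ Set.Ioo (0:ℝ) t := fun h => absurd h.2 (not_lt.2 hgt.le)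
    rw [Set.indicator_of_notMem h0]
    refine Tendsto.congr' ?_ tendsto_const_nhds
    filter_upwards [Ioo_mem_nhdsGT (by linarith : (0:ℝ) < u - t)] with ε hε
    have hS : Set.Ioc 0 t ∩ Set.Ico (u-ε) u = ∅ := by
      ext s; simp only [Set.mem_inter_iff, Set.mem_Ioc, Set.mem_Ico, Set.mem_empty_iff_false,
        iff_false, not_and]
      intro h1 h2 h3; nlinarith [h1.2, hε.2]
    rw [hS]; simp

lemma fubini_step (t ε : ℝ) (hε : 0 < ε) (ht0 : 0 ≤ t)
    (X Y : ℝ → ℝ) (g : ℝ → ℝ) (hYc : Continuous Y) (hgint : Integrable g)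
    (C : ℝ) (hC0 : 0 ≤ C) (hC : ∀ x, |Y x| ≤ C)
    (hXg : ∀ s : ℝ, 0 ≤ s → X (s + ε) - X s = ∫ u in s..(s+ε), g u) :
    Integrable (fun u => g u * (∫ s in Set.Ioc 0 t ∩ Set.Ico (u-ε) u, Y s) / ε) ∧
    (∫ u, g u * (∫ s in Set.Ioc 0 t ∩ Set.Ico (u-ε) u, Y s) / ε) = Iminus ε Y X t := by
  have hgm := hgint.aestronglyMeasurable
  set A : Set (ℝ × ℝ) := {p | p.1 ∈ Set.Ioc (0:ℝ) t ∧ p.2 ∈ Set.Ioc p.1 (p.1 + ε)} with hA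
  have hAm : MeasurableSet A := by
    have : A = ({p : ℝ × ℝ | 0 < p.1} ∩ {p | p.1 ≤ t}) ∩
        ({p | p.1 < p.2} ∩ {p | p.2 ≤ p.1 + ε}) := by
      ext p
      simp only [hA, Set.mem_setOf_eq, Set.mem_Ioc, Set.mem_inter_iff]
      try tauto
    rw [this]
    exact ((measurableSet_lt measurable_const measurable_fst).inter
        (measurableSet_le measurable_fst measurable_const)).inter
      ((measurableSet_lt measurable_fst measurable_snd).inter
        (measurableSet_le measurable_snd (measurable_fst.add_const ε)))
  set F : ℝ × ℝ → ℝ := A.indicator (fun p => Y p.1 * g p.2 / ε) with hF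
  have hFm : AEStronglyMeasurable F (volume.prod volume) := by
    apply AEStronglyMeasurable.indicator _ hAm
    refine ((((hYc.comp continuous_fst).aestronglyMeasurable).mul hgm.comp_snd).mul
      (aestronglyMeasurable_const (b := ε⁻¹))).congr (Eventually.of_forall fun p => ?_)
    simp [div_eq_mul_inv]
  have hFint : Integrable F (volume.prod volume) := by
    refine Integrable.mono'
      (g := fun p => (Set.Ioc (0:ℝ) t).indicator (fun _ => C/ε) p.1 * |g p.2|) ?_ hFm ?_
    · exact Integrable.mul_prod
        ((integrable_indicator_iff measurableSet_Ioc).2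
          (integrableOn_const measure_Ioc_lt_top.ne)) hgint.abs
    · refine Eventually.of_forall fun p => ?_
      by_cases hp : p ∈ A
      · rw [hF, Set.indicator_of_mem hp, Set.indicator_of_mem hp.1]
        rw [Real.norm_eq_abs, abs_div, abs_mul, abs_of_pos hε]
        rw [div_mul_eq_mul_div]
        gcongr
        exact hC p.1
      · rw [hF, Set.indicator_of_notMem hp]
        simp only [norm_zero]
        by_cases h1 : p.1 ∈ Set.Ioc (0:ℝ) t
        · rw [Set.indicator_of_mem h1]
          positivity
        · rw [Set.indicator_of_notMem h1]; simp [abs_nonneg]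
  have hFint' : Integrable F volume := by rwa [Measure.volume_eq_prod]
  -- inner integral in u
  have hinner1 : ∀ s : ℝ, (∫ u, F (s, u)) =
      (Set.Ioc (0:ℝ) t).indicator (fun s => Y s * (X (s + ε) - X s) / ε) s := by
    intro s
    by_cases hs : s ∈ Set.Ioc (0:ℝ) t
    · have h1 : (fun u => F (s, u)) = (Set.Ioc s (s+ε)).indicator (fun u => (Y s / ε) * g u) := by
        funext u
        by_cases hu : u ∈ Set.Ioc s (s + ε)
        · rw [hF, Set.indicator_of_mem (show (s,u) ∈ A from ⟨hs, hu⟩),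
            Set.indicator_of_mem hu]; ring
        · rw [hF, Set.indicator_of_notMem (fun h => hu h.2), Set.indicator_of_notMem hu]
      rw [h1, integral_indicator measurableSet_Ioc, integral_const_mul,
        Set.indicator_of_mem hs, hXg s hs.1.le,
        intervalIntegral.integral_of_le (by linarith : s ≤ s + ε)]
      ring
    · have h1 : (fun u => F (s, u)) = fun _ => 0 := by
        funext u; exact Set.indicator_of_notMem (fun h => hs h.1) _
      rw [h1, integral_zero, Set.indicator_of_notMem hs]
  -- inner integral in s
  have hinner2 : ∀ u : ℝ, (∫ s, F (s, u)) =
      g u * (∫ s in Set.Ioc 0 t ∩ Set.Ico (u-ε) u, Y s) / ε := by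
    intro u
    have h1 : (fun s => F (s, u)) =
        (Set.Ioc 0 t ∩ Set.Ico (u-ε) u).indicator (fun s => Y s * (g u / ε)) := by
      funext s
      have hiff : (s, u) ∈ A ↔ s ∈ Set.Ioc 0 t ∩ Set.Ico (u-ε) u := by
        simp only [hA, Set.mem_setOf_eq, Set.mem_Ioc, Set.mem_Ico, Set.mem_inter_iff]
        constructor
        · rintro ⟨h1, h2, h3⟩; exact ⟨h1, by linarith, h2⟩
        · rintro ⟨h1, h2, h3⟩; exact ⟨h1, h3, by linarith⟩
      by_cases hs : s ∈ Set.Ioc 0 t ∩ Set.Ico (u-ε) u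
      · rw [hF, Set.indicator_of_mem (hiff.2 hs), Set.indicator_of_mem hs]; ring
      · rw [hF, Set.indicator_of_notMem (fun h => hs (hiff.1 h)), Set.indicator_of_notMem hs]
    rw [h1, integral_indicator (measurableSet_Ioc.inter measurableSet_Ico),
      integral_mul_const]
    ring
  -- Fubini
  have hswap : (∫ s, ∫ u, F (s, u)) = ∫ u, ∫ s, F (s, u) :=
    integral_integral_swap (f := fun s u => F (s, u)) hFint
  constructor
  · refine (hFint.integral_prod_right).congr (Eventually.of_forall fun u => ?_)
    exact hinner2 u
  · have e1 : Iminus ε Y X t = ∫ s, ∫ u, F (s, u) := by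
      unfold Iminus
      rw [intervalIntegral.integral_of_le ht0]
      have e2 : ∫ s in Set.Ioc (0:ℝ) t, Y s * (X (s + ε) - X s) / ε
          = ∫ s in Set.Ioc (0:ℝ) t, (∫ u, F (s, u)) :=
        setIntegral_congr_fun measurableSet_Ioc
          (fun s hs => by rw [hinner1 s, Set.indicator_of_mem hs])
      rw [e2]
      exact setIntegral_eq_integral_of_forall_compl_eq_zero fun s hs => by
        rw [hinner1 s, Set.indicator_of_notMem hs]
    rw [e1, hswap]
    exact integral_congr_ae (Eventually.of_forall fun u => (hinner2 u).symm)

/-- if `X` is absolutely continuous with derivative `X' ∈ L¹([0,T])`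
and `Y` is continuous, then the forward integral `∫₀ᵗ Y d⁻X` exists and equals
`∫₀ᵗ Y(s) X'(s) ds` for every `t ∈ [0,T]`. -/
theorem stmt9 (T : ℝ) (hT : 0 < T) (X Y X' : ℝ → ℝ)
    (hXc : Continuous X) (hYc : Continuous Y)
    (hXe : ExtConst T X) (hYe : ExtConst T Y)
    (hX'int : IntegrableOn X' (Set.Icc 0 T))
    (hAC : ∀ t ∈ Set.Icc (0:ℝ) T, X t = X 0 + ∫ s in (0:ℝ)..t, X' s) :
    ∀ t ∈ Set.Icc (0:ℝ) T,
      Tendsto (fun ε => Iminus ε Y X t) (nhdsWithin 0 (Set.Ioi 0))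
        (nhds (∫ s in (0:ℝ)..t, Y s * X' s)) := by
  intro t ht
  obtain ⟨ht0, htT⟩ := ht
  set g := (Set.Icc (0:ℝ) T).indicator X' with hg
  have hgint : Integrable g := by
    rw [hg, integrable_indicator_iff measurableSet_Icc]; exact hX'int
  obtain ⟨C, hC0, hC⟩ : ∃ C : ℝ, 0 ≤ C ∧ ∀ x, |Y x| ≤ C := by
    obtain ⟨C, hC⟩ := (isCompact_Icc (a := (0:ℝ)) (b := T)).exists_bound_of_continuousOn
      hYc.continuousOn
    refine ⟨C, (abs_nonneg (Y 0)).trans (by simpa using hC 0 ⟨le_refl _, hT.le⟩), fun x => ?_⟩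
    rcases le_total x 0 with h | h
    · rw [hYe.1 x h]; simpa using hC 0 ⟨le_refl _, hT.le⟩
    rcases le_total T x with h' | h'
    · rw [hYe.2 x h']; simpa using hC T ⟨hT.le, le_refl _⟩
    · simpa using hC x ⟨h, h'⟩
  have hkeyA := keyA T X X' hXe.2 hX'int hAC
  have hkey := fun (ε : ℝ) (hε : 0 < ε) =>
    fubini_step t ε hε ht0 X Y g hYc hgint C hC0 hC
      (fun s hs => hkeyA s (s + ε) hs (by linarith))
  have hlim_int : (∫ u, (Set.Ioo (0:ℝ) t).indicator (fun v => g v * Y v) u)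
      = ∫ s in (0:ℝ)..t, Y s * X' s := by
    rw [integral_indicator measurableSet_Ioo, intervalIntegral.integral_of_le ht0,
      integral_Ioc_eq_integral_Ioo]
    refine setIntegral_congr_fun measurableSet_Ioo fun v hv => ?_
    rw [hg, Set.indicator_of_mem (Set.mem_Icc.mpr ⟨hv.1.le, hv.2.le.trans htT⟩)]
    ring
  have main : Tendsto
      (fun ε => ∫ u, g u * (∫ s in Set.Ioc 0 t ∩ Set.Ico (u-ε) u, Y s) / ε)
      (nhdsWithin 0 (Set.Ioi 0))
      (nhds (∫ u, (Set.Ioo (0:ℝ) t).indicator (fun v => g v * Y v) u)) := by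
    apply tendsto_integral_filter_of_dominated_convergence (fun u => C * |g u|)
    · filter_upwards [self_mem_nhdsWithin] with ε (hε : ε ∈ Set.Ioi (0:ℝ))
      exact (hkey ε hε).1.aestronglyMeasurable
    · filter_upwards [self_mem_nhdsWithin] with ε (hε : ε ∈ Set.Ioi (0:ℝ))
      refine Eventually.of_forall fun u => ?_
      have hε' : (0:ℝ) < ε := hε
      set S := Set.Ioc 0 t ∩ Set.Ico (u-ε) u with hS
      have hSle : volume S ≤ ENNReal.ofReal ε := by
        calc volume S ≤ volume (Set.Ico (u-ε) u) :=
              measure_mono Set.inter_subset_right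
          _ = ENNReal.ofReal (u - (u-ε)) := Real.volume_Ico
          _ = ENNReal.ofReal ε := by ring_nf
      have hfin : volume S < ⊤ := lt_of_le_of_lt hSle ENNReal.ofReal_lt_top
      have htoReal : (volume S).toReal ≤ ε := by
        have := ENNReal.toReal_mono ENNReal.ofReal_ne_top hSle
        rwa [ENNReal.toReal_ofReal hε'.le] at this
      have h1 : |∫ s in S, Y s| ≤ C * ε := by
        have h2 := norm_setIntegral_le_of_norm_le_const (μ := volume) (f := fun s => Y s) hfin
          (fun x _ => by simpa using hC x)
        rw [Real.norm_eq_abs] at h2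
        refine h2.trans ?_
        exact mul_le_mul_of_nonneg_left htoReal hC0
      rw [Real.norm_eq_abs, abs_div, abs_of_pos hε', abs_mul, div_le_iff₀ hε']
      calc |g u| * |∫ s in S, Y s| ≤ |g u| * (C * ε) := by gcongr
        _ = C * |g u| * ε := by ring
    · exact hgint.abs.const_mul C
    · have h0 : ∀ᵐ u : ℝ, u ≠ 0 := by
        rw [ae_iff]; simpa using measure_singleton (0:ℝ)
      have h1 : ∀ᵐ u : ℝ, u ≠ t := by
        rw [ae_iff]; simpa using measure_singleton t
      filter_upwards [h0, h1] with u hu0 hut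
      exact limit_step t Y g hYc u hu0 hut
  rw [hlim_int] at main
  refine Tendsto.congr' ?_ main
  filter_upwards [self_mem_nhdsWithin] with ε (hε : ε ∈ Set.Ioi (0:ℝ))
  exact (hkey ε hε).2
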